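/- Let 𝒳 and 𝒴 be finite alphabets. A matrix M ∈ ℝ^{|𝒴|×|𝒳|} is the divergence transfer matrix of some strictly positive joint pmf on 𝒳×𝒴 — i.e., there exists a pmf P_{X,Y} with P_{X,Y}(x,y) > 0 for all x,y such that M(y,x) = P_{X,Y}(x,y)/√(P_X(x)P_Y(y)) — if and only if every entry of M is strictly positive and the spectral norm of M equals 1. -/

import Mathlib

open Matrix

/-- The `i`-th largest element (0-indexed) of a finite family of real numbers
(by convention `0` if `i` is out of range). -/
noncomputable def ithLargest {ι : Type*} [Fintype ι] (f : ι → ℝ) (i : ℕ) : ℝ :=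
  (((Finset.univ.val.map f).sort (· ≤ ·)).reverse).getD i 0

/-- The `i`-th largest singular value (0-indexed) of a real matrix `A`: the square root of
the `i`-th largest eigenvalue of `Aᴴ * A` (over `ℝ`, `Aᴴ = Aᵀ`). -/
noncomputable def singularValue {m n : Type*} [Fintype m] [Fintype n] [DecidableEq n]
    (A : Matrix m n ℝ) (i : ℕ) : ℝ :=
  Real.sqrt (ithLargest (Matrix.isHermitian_conjTranspose_mul_self A).eigenvalues i)

/-- The spectral (operator) norm of a real matrix: its largest singular value. -/
noncomputable def matrixSpectralNorm {m n : Type*} [Fintype m] [Fintype n] [DecidableEq n]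
    (A : Matrix m n ℝ) : ℝ :=
  singularValue A 0

set_option linter.unusedSectionVars false
set_option linter.unusedVariables false


lemma ithLargest0 {ι : Type*} [Fintype ι] [Nonempty ι] (f : ι → ℝ) :
    (∃ i, f i = ithLargest f 0) ∧ ∀ j, f j ≤ ithLargest f 0 := by
  unfold ithLargest
  set L : List ℝ := (Finset.univ.val.map f).sort (· ≤ ·) with hL
  have hlen : L.length = Fintype.card ι := by
    simp [hL, Multiset.length_sort]
  have hpos : 0 < L.length := by rw [hlen]; exact Fintype.card_pos
  have hrev : 0 < L.reverse.length := by simpa using hpos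
  have hget : L.reverse.getD 0 0 = L.reverse[0] := List.getD_eq_getElem _ _ hrev
  have hrevel : L.reverse[0] = L[L.length - 1] := by
    rw [List.getElem_reverse]; simp
  have hsorted : L.Pairwise (· ≤ ·) := Multiset.pairwise_sort _ _
  have hmemiff : ∀ a : ℝ, a ∈ L ↔ ∃ i, f i = a := by
    intro a
    rw [hL, Multiset.mem_sort, Multiset.mem_map]
    simp
  constructor
  · have : L[L.length-1] ∈ L := List.getElem_mem _
    rw [hget, hrevel]
    exact (hmemiff _).1 this
  · intro j
    have hmem : f j ∈ L := (hmemiff _).2 ⟨j, rfl⟩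
    obtain ⟨k, hk, hkeq⟩ := List.getElem_of_mem hmem
    rw [hget, hrevel, ← hkeq]
    exact hsorted.rel_get_of_le (by simp; omega : (⟨k, hk⟩ : Fin L.length) ≤ ⟨L.length - 1, by omega⟩)


section Spectral
variable {n : Type*} [Fintype n] [DecidableEq n] {B : Matrix n n ℝ} (hB : B.IsHermitian)

lemma spectral_decomp (x : n → ℝ) :
    let U : Matrix n n ℝ := hB.eigenvectorUnitary
    let y : n → ℝ := star U *ᵥ x
    (U *ᵥ y = x) ∧ (x ⬝ᵥ (B *ᵥ x) = ∑ i, hB.eigenvalues i * y i ^ 2) ∧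
      (x ⬝ᵥ x = ∑ i, y i ^ 2) ∧ (B *ᵥ x = U *ᵥ (fun i => hB.eigenvalues i * y i)) := by
  intro U y
  have hU1 : U * star U = 1 := (Matrix.mem_unitaryGroup_iff).mp hB.eigenvectorUnitary.2
  have hU2 : star U * U = 1 := (Matrix.mem_unitaryGroup_iff').mp hB.eigenvectorUnitary.2
  have hx : U *ᵥ y = x := by
    show U *ᵥ (star U *ᵥ x) = x
    rw [Matrix.mulVec_mulVec, hU1, Matrix.one_mulVec]
  have hofReal : (RCLike.ofReal ∘ hB.eigenvalues : n → ℝ) = hB.eigenvalues := by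
    ext i; simp
  have hdiag : (Matrix.diagonal hB.eigenvalues) *ᵥ y = fun i => hB.eigenvalues i * y i := by
    ext i; rw [Matrix.mulVec_diagonal]
  have hBx : B *ᵥ x = U *ᵥ (fun i => hB.eigenvalues i * y i) := by
    conv_lhs => rw [hB.spectral_theorem]
    rw [Unitary.conjStarAlgAut_apply, ← Matrix.mulVec_mulVec, ← Matrix.mulVec_mulVec]
    show U *ᵥ (Matrix.diagonal hB.eigenvalues *ᵥ y) = _
    rw [hdiag]
  have hstarU : star U = Uᵀ := by
    ext i j; simp [Matrix.star_apply]
  have hdot : ∀ z : n → ℝ, x ⬝ᵥ (U *ᵥ z) = y ⬝ᵥ z := by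
    intro z
    rw [Matrix.dotProduct_mulVec]
    congr 1
    show x ᵥ* U = star U *ᵥ x
    rw [hstarU, Matrix.mulVec_transpose]
  refine ⟨hx, ?_, ?_, hBx⟩
  · rw [hBx, hdot]
    exact Finset.sum_congr rfl fun i _ => by ring
  · have : x ⬝ᵥ x = x ⬝ᵥ (U *ᵥ y) := by rw [hx]
    rw [this, hdot]
    simp [dotProduct, pow_two]
end Spectral

section Spectral2
variable {n : Type*} [Fintype n] [DecidableEq n] {B : Matrix n n ℝ} (hB : B.IsHermitian)

lemma rayleigh_le {μ : ℝ} (hμ : ∀ i, hB.eigenvalues i ≤ μ) (x : n → ℝ) :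
    x ⬝ᵥ (B *ᵥ x) ≤ μ * (x ⬝ᵥ x) := by
  obtain ⟨hx, h1, h2, h3⟩ := spectral_decomp hB x
  rw [h1, h2, Finset.mul_sum]
  exact Finset.sum_le_sum fun i _ => mul_le_mul_of_nonneg_right (hμ i) (sq_nonneg _)

lemma rayleigh_eq {μ : ℝ} (hμ : ∀ i, hB.eigenvalues i ≤ μ) (x : n → ℝ)
    (h : x ⬝ᵥ (B *ᵥ x) = μ * (x ⬝ᵥ x)) : B *ᵥ x = μ • x := by
  obtain ⟨hx, h1, h2, h3⟩ := spectral_decomp hB x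
  set U : Matrix n n ℝ := (hB.eigenvectorUnitary : Matrix n n ℝ)
  set y : n → ℝ := star U *ᵥ x with hy
  have hzero : ∑ i, (μ - hB.eigenvalues i) * y i ^ 2 = 0 := by
    have := h
    rw [h1, h2, Finset.mul_sum] at this
    simp only [sub_mul]
    rw [Finset.sum_sub_distrib, this, sub_self]
  have heach : ∀ i ∈ Finset.univ, (μ - hB.eigenvalues i) * y i ^ 2 = 0 :=
    (Finset.sum_eq_zero_iff_of_nonneg (fun i _ =>
      mul_nonneg (sub_nonneg.2 (hμ i)) (sq_nonneg _))).1 hzero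
  have hcoef : (fun i => hB.eigenvalues i * y i) = μ • y := by
    ext i
    have := heach i (Finset.mem_univ i)
    rcases mul_eq_zero.1 this with h' | h'
    · have : hB.eigenvalues i = μ := by linarith [sub_eq_zero.1 h']
      simp [this, Pi.smul_apply]
    · have : y i = 0 := by
        have := sq_eq_zero_iff.1 h'; exact this
      simp [this]
  rw [h3, hcoef, Matrix.mulVec_smul, hx]

lemma eig_exists {t : ℝ} {x : n → ℝ} (hx : x ≠ 0) (h : B *ᵥ x = t • x) :
    ∃ i, hB.eigenvalues i = t := by
  obtain ⟨hxx, h1, h2, h3⟩ := spectral_decomp hB x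
  set U : Matrix n n ℝ := (hB.eigenvectorUnitary : Matrix n n ℝ)
  set y : n → ℝ := star U *ᵥ x with hy
  have hU2 : star U * U = 1 := (Matrix.mem_unitaryGroup_iff').mp hB.eigenvectorUnitary.2
  have hinj : ∀ z : n → ℝ, star U *ᵥ (U *ᵥ z) = z := by
    intro z; rw [Matrix.mulVec_mulVec, hU2, Matrix.one_mulVec]
  have hyne : y ≠ 0 := by
    intro h0
    apply hx
    rw [← hxx, h0, Matrix.mulVec_zero]
  have key : (fun i => hB.eigenvalues i * y i) = t • y := by
    have : U *ᵥ (fun i => hB.eigenvalues i * y i) = U *ᵥ (t • y) := by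
      rw [← h3, h, Matrix.mulVec_smul, hxx]
    have := congrArg (fun z => star U *ᵥ z) this
    simpa [hinj] using this
  obtain ⟨i, hi⟩ := Function.ne_iff.1 hyne
  refine ⟨i, ?_⟩
  have := congrFun key i
  simp only [Pi.smul_apply, smul_eq_mul] at this
  exact mul_right_cancel₀ (by simpa using hi) this
end Spectral2


section Main
variable {X Y : Type*} [Fintype X] [Fintype Y] [DecidableEq X] [DecidableEq Y]
    [Nonempty X] [Nonempty Y]

lemma conjT_eq (M : Matrix Y X ℝ) : Mᴴ = Mᵀ := by
  ext i j; simp [Matrix.conjTranspose_apply]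

lemma dot_B (M : Matrix Y X ℝ) (x : X → ℝ) :
    x ⬝ᵥ ((Mᴴ * M) *ᵥ x) = (M *ᵥ x) ⬝ᵥ (M *ᵥ x) := by
  rw [← Matrix.mulVec_mulVec, conjT_eq, Matrix.dotProduct_mulVec, Matrix.vecMul_transpose]

lemma forward_dir (M : Matrix Y X ℝ) (P : X → Y → ℝ) (hP : ∀ x y, 0 < P x y)
    (hPs : ∑ x, ∑ y, P x y = 1)
    (hM : ∀ x y, M y x = P x y / Real.sqrt ((∑ y', P x y') * (∑ x', P x' y))) :
    (∀ y x, 0 < M y x) ∧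
      (∃ i1, (Matrix.isHermitian_conjTranspose_mul_self M).eigenvalues i1 = 1) ∧
      (∀ j, (Matrix.isHermitian_conjTranspose_mul_self M).eigenvalues j ≤ 1) := by
  have hB := Matrix.isHermitian_conjTranspose_mul_self M
  set u : X → ℝ := fun x => Real.sqrt (∑ y, P x y) with hu_def
  set v : Y → ℝ := fun y => Real.sqrt (∑ x, P x y) with hv_def
  have hrowpos : ∀ x, 0 < ∑ y, P x y := fun x =>
    Finset.sum_pos (fun y _ => hP x y) Finset.univ_nonempty
  have hcolpos : ∀ y, 0 < ∑ x, P x y := fun y =>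
    Finset.sum_pos (fun x _ => hP x y) Finset.univ_nonempty
  have hu : ∀ x, 0 < u x := fun x => Real.sqrt_pos.2 (hrowpos x)
  have hv : ∀ y, 0 < v y := fun y => Real.sqrt_pos.2 (hcolpos y)
  have hu2 : ∀ x, u x ^ 2 = ∑ y, P x y := fun x => Real.sq_sqrt (hrowpos x).le
  have hv2 : ∀ y, v y ^ 2 = ∑ x, P x y := fun y => Real.sq_sqrt (hcolpos y).le
  have hM' : ∀ x y, M y x = P x y / (u x * v y) := by
    intro x y
    rw [hM x y, Real.sqrt_mul (hrowpos x).le]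
  have hMpos : ∀ y x, 0 < M y x := fun y x => by
    rw [hM' x y]; exact div_pos (hP x y) (mul_pos (hu x) (hv y))
  -- contraction
  have hcontr : ∀ z : X → ℝ, (M *ᵥ z) ⬝ᵥ (M *ᵥ z) ≤ z ⬝ᵥ z := by
    intro z
    have step1 : ∀ y, ((M *ᵥ z) y) ^ 2 ≤ ∑ x, P x y * (z x / u x) ^ 2 := by
      intro y
      have hfg : (M *ᵥ z) y = ∑ x, Real.sqrt (P x y) *
          (Real.sqrt (P x y) * z x / (u x * v y)) := by
        simp only [Matrix.mulVec, dotProduct]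
        refine Finset.sum_congr rfl fun x _ => ?_
        rw [hM' x y]
        rw [show Real.sqrt (P x y) * (Real.sqrt (P x y) * z x / (u x * v y))
          = (Real.sqrt (P x y) * Real.sqrt (P x y)) * z x / (u x * v y) by ring,
          Real.mul_self_sqrt (hP x y).le]
        ring
      have hcs := Finset.sum_mul_sq_le_sq_mul_sq Finset.univ
        (fun x => Real.sqrt (P x y)) (fun x => Real.sqrt (P x y) * z x / (u x * v y))
      rw [hfg]
      refine le_trans hcs ?_
      have h1 : ∑ x, Real.sqrt (P x y) ^ 2 = v y ^ 2 := by
        rw [hv2]; exact Finset.sum_congr rfl fun x _ => Real.sq_sqrt (hP x y).le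
      rw [h1]
      rw [Finset.mul_sum]
      refine le_of_eq (Finset.sum_congr rfl fun x _ => ?_)
      rw [div_pow, mul_pow, mul_pow, Real.sq_sqrt (hP x y).le, div_pow]
      field_simp [(hu x).ne', (hv y).ne']
    calc (M *ᵥ z) ⬝ᵥ (M *ᵥ z) = ∑ y, ((M *ᵥ z) y) ^ 2 := by
          simp [dotProduct, pow_two]
      _ ≤ ∑ y, ∑ x, P x y * (z x / u x) ^ 2 :=
          Finset.sum_le_sum fun y _ => step1 y
      _ = ∑ x, (z x / u x) ^ 2 * ∑ y, P x y := by
          rw [Finset.sum_comm]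
          refine Finset.sum_congr rfl fun x _ => ?_
          rw [Finset.mul_sum]
          exact Finset.sum_congr rfl fun y _ => by ring
      _ = ∑ x, z x ^ 2 := by
          refine Finset.sum_congr rfl fun x _ => ?_
          rw [← hu2, div_pow]
          field_simp [(hu x).ne']
      _ = z ⬝ᵥ z := by simp [dotProduct, pow_two]
  -- eigenvector with eigenvalue 1
  have hMu : M *ᵥ u = v := by
    ext y
    simp only [Matrix.mulVec, dotProduct]
    have : ∀ x, M y x * u x = P x y / v y := by
      intro x; rw [hM' x y]; field_simp [(hu x).ne', (hv y).ne']
    rw [Finset.sum_congr rfl fun x _ => this x, ← Finset.sum_div, ← hv2]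
    field_simp [pow_two]
  have hMv : Mᴴ *ᵥ v = u := by
    ext x
    simp only [Matrix.mulVec, dotProduct, Matrix.conjTranspose_apply, star_trivial]
    have : ∀ y, M y x * v y = P x y / u x := by
      intro y; rw [hM' x y]; field_simp [(hu x).ne', (hv y).ne']
    rw [Finset.sum_congr rfl fun y _ => this y, ← Finset.sum_div, ← hu2]
    field_simp [pow_two]
  have hBu : (Mᴴ * M) *ᵥ u = (1 : ℝ) • u := by
    rw [← Matrix.mulVec_mulVec, hMu, hMv, one_smul]
  have hune : u ≠ 0 := by
    intro h
    exact (hu (Classical.arbitrary X)).ne' (congrFun h (Classical.arbitrary X))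
  have hex : ∃ i1, hB.eigenvalues i1 = 1 := eig_exists hB hune hBu
  -- eigenvalue bounds
  have hbd : ∀ j, hB.eigenvalues j ≤ 1 := by
    intro j
    set e : X → ℝ := ⇑(hB.eigenvectorBasis j) with he_def
    have he : (Mᴴ * M) *ᵥ e = hB.eigenvalues j • e := hB.mulVec_eigenvectorBasis j
    have hee : e ⬝ᵥ e = 1 := by
      have hn : ‖hB.eigenvectorBasis j‖ = 1 := hB.eigenvectorBasis.orthonormal.1 j
      rw [EuclideanSpace.norm_eq] at hn
      have := Real.sqrt_eq_one.1 hn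
      simp [pow_two, Real.norm_eq_abs, abs_mul_abs_self] at this
      simp only [dotProduct]
      exact this
    have h1 : e ⬝ᵥ ((Mᴴ * M) *ᵥ e) = hB.eigenvalues j := by
      rw [he, dotProduct_smul, hee]; simp
    have h2 := hcontr e
    rw [← dot_B, h1, hee] at h2
    exact h2
  exact ⟨hMpos, hex, hbd⟩
end Main
section Back
open Matrix
variable {X Y : Type*} [Fintype X] [Fintype Y] [DecidableEq X] [DecidableEq Y]
    [Nonempty X] [Nonempty Y]

lemma backward_dir (M : Matrix Y X ℝ) (hMpos : ∀ y x, 0 < M y x)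
    (hex : ∃ i0, (Matrix.isHermitian_conjTranspose_mul_self M).eigenvalues i0 = 1)
    (hbd : ∀ j, (Matrix.isHermitian_conjTranspose_mul_self M).eigenvalues j ≤ 1) :
    ∃ P : X → Y → ℝ, (∀ x y, 0 < P x y) ∧ (∑ x, ∑ y, P x y = 1) ∧
      ∀ x y, M y x = P x y / Real.sqrt ((∑ y', P x y') * (∑ x', P x' y)) := by
  have hB := Matrix.isHermitian_conjTranspose_mul_self M
  set B : Matrix X X ℝ := Mᴴ * M with hBdef
  have hBpos : ∀ x x', 0 < B x x' := by
    intro x x'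
    rw [hBdef, Matrix.mul_apply]
    exact Finset.sum_pos (fun y _ => by
      simp only [Matrix.conjTranspose_apply, star_trivial]
      exact mul_pos (hMpos y x) (hMpos y x')) Finset.univ_nonempty
  obtain ⟨i0, hi0⟩ := hex
  set w : X → ℝ := ⇑(hB.eigenvectorBasis i0) with hwdef
  have hw : B *ᵥ w = (1 : ℝ) • w := by
    have := hB.mulVec_eigenvectorBasis i0
    rwa [hi0] at this
  have wsum : ∑ x, w x ^ 2 = 1 := by
    have hn : ‖hB.eigenvectorBasis i0‖ = 1 := hB.eigenvectorBasis.orthonormal.1 i0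
    rw [EuclideanSpace.norm_eq] at hn
    have := Real.sqrt_eq_one.1 hn
    simpa [pow_two, Real.norm_eq_abs, abs_mul_abs_self] using this
  set a : X → ℝ := fun x => |w x| with hadef
  have asum : ∑ x, a x ^ 2 = 1 := by
    rw [← wsum]; exact Finset.sum_congr rfl fun x _ => by simp [hadef, sq_abs]
  have haa : a ⬝ᵥ a = 1 := by
    rw [← asum]; simp [dotProduct, pow_two]
  have wdot : w ⬝ᵥ (B *ᵥ w) = 1 := by
    rw [hw, dotProduct_smul]
    simp only [smul_eq_mul, one_mul]
    rw [← wsum]; simp [dotProduct, pow_two]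
  have hge : w ⬝ᵥ (B *ᵥ w) ≤ a ⬝ᵥ (B *ᵥ a) := by
    simp only [dotProduct, Matrix.mulVec, Finset.mul_sum]
    refine Finset.sum_le_sum fun x _ => Finset.sum_le_sum fun x' _ => ?_
    calc w x * (B x x' * w x') ≤ |w x * (B x x' * w x')| := le_abs_self _
      _ = a x * (B x x' * a x') := by
          rw [abs_mul, abs_mul, abs_of_pos (hBpos x x')]
  have hle : a ⬝ᵥ (B *ᵥ a) ≤ 1 := by
    have := rayleigh_le hB hbd a
    rwa [haa, mul_one] at this
  have haBa : a ⬝ᵥ (B *ᵥ a) = 1 * (a ⬝ᵥ a) := by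
    rw [haa, mul_one]
    exact le_antisymm hle (wdot ▸ hge)
  have hBa : B *ᵥ a = a := by
    have := rayleigh_eq hB hbd a haBa
    rwa [one_smul] at this
  have hax0 : ∃ x0, a x0 ≠ 0 := by
    by_contra h
    push_neg at h
    rw [Finset.sum_congr rfl (fun x _ => by rw [h x])] at asum
    simp at asum
  obtain ⟨x0, hx0⟩ := hax0
  have hax0' : 0 < a x0 := lt_of_le_of_ne (abs_nonneg _) (Ne.symm hx0)
  have apos : ∀ x, 0 < a x := by
    intro x
    have h1 : a x = ∑ x', B x x' * a x' := by
      conv_lhs => rw [← hBa]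
      rfl
    rw [h1]
    have h2 : B x x0 * a x0 ≤ ∑ x', B x x' * a x' :=
      Finset.single_le_sum (fun x' _ => mul_nonneg (hBpos x x').le (abs_nonneg _))
        (Finset.mem_univ x0)
    exact lt_of_lt_of_le (mul_pos (hBpos x x0) hax0') h2
  set v : Y → ℝ := M *ᵥ a with hvdef
  have vpos : ∀ y, 0 < v y := fun y =>
    Finset.sum_pos (fun x _ => mul_pos (hMpos y x) (apos x)) Finset.univ_nonempty
  have hMva : ∀ x, ∑ y, M y x * v y = a x := by
    intro x
    have : (Mᴴ *ᵥ v) x = a x := by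
      rw [hvdef, Matrix.mulVec_mulVec, ← hBdef, hBa]
    rw [← this]
    simp [Matrix.mulVec, dotProduct, Matrix.conjTranspose_apply]
  have hMav : ∀ y, ∑ x, M y x * a x = v y := fun y => rfl
  refine ⟨fun x y => a x * M y x * v y, fun x y =>
    mul_pos (mul_pos (apos x) (hMpos y x)) (vpos y), ?_, ?_⟩
  · calc ∑ x, ∑ y, a x * M y x * v y = ∑ x, a x * ∑ y, M y x * v y := by
          refine Finset.sum_congr rfl fun x _ => ?_
          rw [Finset.mul_sum]
          exact Finset.sum_congr rfl fun y _ => by ring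
      _ = 1 := by
          rw [← asum]
          exact Finset.sum_congr rfl fun x _ => by rw [hMva x]; ring
  · intro x y
    have hrow : ∑ y', a x * M y' x * v y' = a x ^ 2 := by
      calc ∑ y', a x * M y' x * v y' = a x * ∑ y', M y' x * v y' := by
            rw [Finset.mul_sum]; exact Finset.sum_congr rfl fun y' _ => by ring
        _ = a x ^ 2 := by rw [hMva x]; ring
    have hcol : ∑ x', a x' * M y x' * v y = v y ^ 2 := by
      calc ∑ x', a x' * M y x' * v y = v y * ∑ x', M y x' * a x' := by
            rw [Finset.mul_sum]; exact Finset.sum_congr rfl fun x' _ => by ring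
        _ = v y ^ 2 := by rw [hMav y]; ring
    rw [hrow, hcol]
    rw [show a x ^ 2 * v y ^ 2 = (a x * v y) ^ 2 by ring,
      Real.sqrt_sq (mul_pos (apos x) (vpos y)).le]
    field_simp [(apos x).ne', (vpos y).ne']
end Back

theorem stmt_3 {X Y : Type*} [Fintype X] [Fintype Y] [DecidableEq X] [DecidableEq Y]
    [Nonempty X] [Nonempty Y] (M : Matrix Y X ℝ) :
    (∃ P : X → Y → ℝ, (∀ x y, 0 < P x y) ∧ (∑ x, ∑ y, P x y = 1) ∧
        ∀ x y, M y x = P x y / Real.sqrt ((∑ y', P x y') * (∑ x', P x' y)))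
    ↔ ((∀ y x, 0 < M y x) ∧ matrixSpectralNorm M = 1) := by
  constructor
  · rintro ⟨P, hP, hPs, hM⟩
    obtain ⟨hMpos, ⟨i1, hi1⟩, hbd⟩ := forward_dir M P hP hPs hM
    refine ⟨hMpos, ?_⟩
    show Real.sqrt (ithLargest (Matrix.isHermitian_conjTranspose_mul_self M).eigenvalues 0) = 1
    obtain ⟨⟨i0, hi0⟩, hle⟩ := ithLargest0 (Matrix.isHermitian_conjTranspose_mul_self M).eigenvalues
    have h1 : ithLargest (Matrix.isHermitian_conjTranspose_mul_self M).eigenvalues 0 ≤ 1 :=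
      hi0 ▸ hbd i0
    have h2 : (1:ℝ) ≤ ithLargest (Matrix.isHermitian_conjTranspose_mul_self M).eigenvalues 0 :=
      hi1 ▸ hle i1
    rw [le_antisymm h1 h2, Real.sqrt_one]
  · rintro ⟨hMpos, hnorm⟩
    have hnorm' : Real.sqrt
        (ithLargest (Matrix.isHermitian_conjTranspose_mul_self M).eigenvalues 0) = 1 := hnorm
    have hmu : ithLargest (Matrix.isHermitian_conjTranspose_mul_self M).eigenvalues 0 = 1 :=
      Real.sqrt_eq_one.1 hnorm'
    obtain ⟨⟨i0, hi0⟩, hle⟩ := ithLargest0 (Matrix.isHermitian_conjTranspose_mul_self M).eigenvalues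
    exact backward_dir M hMpos ⟨i0, hi0.trans hmu⟩ (fun j => hmu ▸ hle j)
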